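/- Suppose h ∈ L_- commutes with J₁, f ∈ L_-, and V(t)f⁻¹ = M(t)⁻¹E(t), V(t)(fh)⁻¹ = M̃(t)⁻¹Ẽ(t) are the unique factorizations with M, M̃ ∈ L_-, E, Ẽ ∈ L_+. Then M̃ = Mh, hence M̃ J₁ M̃⁻¹ = M J₁ M⁻¹ and the formal inverse scattering solutions agree: u_{fh} = u_f. -/

import Mathlib

/-- If `h ∈ L₋` commutes with `J₁` and with `V`, and `V f⁻¹ = M⁻¹ E`,
`V (fh)⁻¹ = M̃⁻¹ Ẽ` are the unique `L₋ × L₊` factorizations, then `M̃ = M h`,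
hence `M̃ J₁ M̃⁻¹ = M J₁ M⁻¹` and the formal inverse scattering solutions agree:
`u_{fh} = (M̃ J₁ M̃⁻¹)₊ - J₁ = (M J₁ M⁻¹)₊ - J₁ = u_f`. -/
theorem scattering_data_right_multiplication {n : ℕ}
    (Lp Lm : Subgroup (Matrix (Fin n) (Fin n) ℂ)ˣ)
    (htriv : ∀ x, x ∈ Lp → x ∈ Lm → x = 1)
    (V f h M E M' E' : (Matrix (Fin n) (Fin n) ℂ)ˣ)
    (J₁ : Matrix (Fin n) (Fin n) ℂ)
    (hf : f ∈ Lm) (hh : h ∈ Lm) (hM : M ∈ Lm) (hM' : M' ∈ Lm)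
    (hE : E ∈ Lp) (hE' : E' ∈ Lp)
    (hhJ : (h : Matrix (Fin n) (Fin n) ℂ) * J₁ = J₁ * (h : Matrix (Fin n) (Fin n) ℂ))
    (hhV : h * V = V * h)
    (hfac : V * f⁻¹ = M⁻¹ * E)
    (hfac' : V * (f * h)⁻¹ = M'⁻¹ * E') :
    M' = M * h ∧
    (M' : Matrix (Fin n) (Fin n) ℂ) * J₁ * (↑M'⁻¹ : Matrix (Fin n) (Fin n) ℂ) =
      (M : Matrix (Fin n) (Fin n) ℂ) * J₁ * (↑M⁻¹ : Matrix (Fin n) (Fin n) ℂ) ∧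
    ∀ proj : Matrix (Fin n) (Fin n) ℂ →ₗ[ℂ] Matrix (Fin n) (Fin n) ℂ,
      proj ((M' : Matrix (Fin n) (Fin n) ℂ) * J₁ * (↑M'⁻¹ : Matrix (Fin n) (Fin n) ℂ)) - J₁ =
        proj ((M : Matrix (Fin n) (Fin n) ℂ) * J₁ * (↑M⁻¹ : Matrix (Fin n) (Fin n) ℂ)) - J₁ := by
  have key : M' = M * h := by
    have h1 : V * (f * h)⁻¹ = (M * h)⁻¹ * E := by
      rw [mul_inv_rev, mul_inv_rev, ← mul_assoc]
      have : V * h⁻¹ = h⁻¹ * V := by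
        calc V * h⁻¹ = h⁻¹ * (h * V) * h⁻¹ := by group
          _ = h⁻¹ * (V * h) * h⁻¹ := by rw [hhV]
          _ = h⁻¹ * V := by group
      rw [this, mul_assoc, hfac, ← mul_assoc]
    have h2 : M' * (M * h)⁻¹ = E' * E⁻¹ := by
      have : M'⁻¹ * E' = (M * h)⁻¹ * E := by rw [← hfac', h1]
      have h3 : E' = M' * ((M * h)⁻¹ * E) := by rw [← this]; simp [← mul_assoc]
      rw [h3]; group
    have hmem1 : M' * (M * h)⁻¹ ∈ Lm := mul_mem hM' (inv_mem (mul_mem hM hh))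
    have hmem2 : M' * (M * h)⁻¹ ∈ Lp := by rw [h2]; exact mul_mem hE' (inv_mem hE)
    have := htriv _ hmem2 hmem1
    have : M' = (M * h) := by
      have h4 := this
      calc M' = M' * (M * h)⁻¹ * (M * h) := by group
        _ = 1 * (M * h) := by rw [h4]
        _ = M * h := one_mul _
    exact this
  have hconj : (M' : Matrix (Fin n) (Fin n) ℂ) * J₁ * (↑M'⁻¹ : Matrix (Fin n) (Fin n) ℂ) =
      (M : Matrix (Fin n) (Fin n) ℂ) * J₁ * (↑M⁻¹ : Matrix (Fin n) (Fin n) ℂ) := by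
    subst key
    rw [mul_inv_rev, Units.val_mul, Units.val_mul]
    have hJh : J₁ * (↑h⁻¹ : Matrix (Fin n) (Fin n) ℂ) = (↑h⁻¹ : Matrix (Fin n) (Fin n) ℂ) * J₁ := by
      have h5 : ((h⁻¹ : (Matrix (Fin n) (Fin n) ℂ)ˣ) : Matrix (Fin n) (Fin n) ℂ) * ((h : (Matrix (Fin n) (Fin n) ℂ)ˣ) : Matrix (Fin n) (Fin n) ℂ) = 1 := by
        rw [← Units.val_mul]; simp
      have h6 : ((h : (Matrix (Fin n) (Fin n) ℂ)ˣ) : Matrix (Fin n) (Fin n) ℂ) * ((h⁻¹ : (Matrix (Fin n) (Fin n) ℂ)ˣ) : Matrix (Fin n) (Fin n) ℂ) = 1 := by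
        rw [← Units.val_mul]; simp
      calc J₁ * (↑h⁻¹ : Matrix (Fin n) (Fin n) ℂ)
          = (↑h⁻¹ * ↑h : Matrix (Fin n) (Fin n) ℂ) * J₁ * ↑h⁻¹ := by rw [h5, one_mul]
        _ = ↑h⁻¹ * (↑h * J₁) * ↑h⁻¹ := by noncomm_ring
        _ = ↑h⁻¹ * (J₁ * ↑h) * ↑h⁻¹ := by rw [hhJ]
        _ = ↑h⁻¹ * J₁ * (↑h * ↑h⁻¹) := by noncomm_ring
        _ = ↑h⁻¹ * J₁ := by rw [h6, mul_one]
    calc (↑M * ↑h : Matrix (Fin n) (Fin n) ℂ) * J₁ * (↑h⁻¹ * ↑M⁻¹) 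
        = ↑M * (↑h * J₁ * ↑h⁻¹) * ↑M⁻¹ := by noncomm_ring
      _ = ↑M * (J₁ * ↑h * ↑h⁻¹) * ↑M⁻¹ := by rw [hhJ]
      _ = ↑M * (J₁ * (↑h * ↑h⁻¹)) * ↑M⁻¹ := by noncomm_ring
      _ = ↑M * J₁ * ↑M⁻¹ := by
          rw [show ((h : (Matrix (Fin n) (Fin n) ℂ)ˣ) : Matrix (Fin n) (Fin n) ℂ) * ↑h⁻¹ = 1 by rw [← Units.val_mul]; simp, mul_one]
  exact ⟨key, hconj, fun proj => by rw [hconj]⟩
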